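/- Let O be the complex octonion algebra and β ∈ O with (β | β) = 1 and n(β) = 0, where (x | y) = (x : ȳ) is the Hermitian product coming from the compact real form O_c. Then x = β̃(β̄x) + β̄̃(βx) for every x ∈ O; consequently O = ker L(β) ⊕ ker L(β̄) where L(β) is left multiplication by β, ker L(β) = Im L(β̃), and dim_ℂ ker L(β) = 4. -/
import Mathlib


open QuadraticMap

/-- The Cayley conjugate `x̃ = (x : e)e − x` in a composition algebra. -/
def cconj {A : Type*} [NonAssocRing A] [Module ℂ A]
    [SMulCommClass ℂ A A] [IsScalarTower ℂ A A]
    (n : QuadraticForm ℂ A) (x : A) : A :=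
  polar (⇑n) x 1 • (1 : A) - x

section aux

variable {O : Type*} [NonAssocRing O] [Module ℂ O]
    [SMulCommClass ℂ O O] [IsScalarTower ℂ O O]
    (n : QuadraticForm ℂ O)

lemma pol_def (x y : O) : polar (⇑n) x y = n (x + y) - n x - n y := rfl

lemma polar_mul_mul (hm : ∀ a b : O, n (a * b) = n a * n b) (x y z : O) :
    polar (⇑n) (x * y) (x * z) = n x * polar (⇑n) y z := by
  simp only [pol_def, ← mul_add, hm]
  ring

lemma polar_four (hm : ∀ a b : O, n (a * b) = n a * n b) (x w y z : O) :
    polar (⇑n) (x * y) (w * z) + polar (⇑n) (w * y) (x * z)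
      = polar (⇑n) x w * polar (⇑n) y z := by
  have h := polar_mul_mul n hm (x + w) y z
  have e : n (x + w) = polar (⇑n) x w + n x + n w := by rw [pol_def]; ring
  rw [add_mul, add_mul, polar_add_left, polar_add_right, polar_add_right,
    e, polar_mul_mul n hm x y z, polar_mul_mul n hm w y z] at h
  linear_combination h

lemma n_one (hnd : ∀ a : O, (∀ b : O, polar (⇑n) a b = 0) → a = 0)
    (hm : ∀ a b : O, n (a * b) = n a * n b) (h10 : (1 : O) ≠ 0) : n 1 = 1 := by
  have h1 : n 1 = n 1 * n 1 := by have := hm 1 1; rwa [one_mul] at this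
  rcases mul_eq_zero.mp (show n 1 * (n 1 - 1) = 0 by linear_combination -h1) with h0 | h0
  · exfalso
    have hall : ∀ x : O, n x = 0 := fun x => by
      have := hm 1 x; rwa [one_mul, h0, zero_mul] at this
    exact h10 (hnd 1 fun b => by simp [pol_def, hall])
  · linear_combination h0

lemma polar_one_one (hn1 : n 1 = 1) : polar (⇑n) (1 : O) 1 = 2 := by
  rw [pol_def, ← two_smul ℂ (1 : O), QuadraticMap.map_smul, hn1]
  norm_num

lemma cconj_mul (x z : O) : cconj n x * z = polar (⇑n) x 1 • z - x * z := by
  rw [cconj, sub_mul, smul_mul_assoc, one_mul]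

lemma polar_mul_cconj (hm : ∀ a b : O, n (a * b) = n a * n b) (x y z : O) :
    polar (⇑n) (x * y) z = polar (⇑n) y (cconj n x * z) := by
  have h := polar_four n hm x 1 y z
  rw [one_mul, one_mul] at h
  rw [cconj_mul, polar_sub_right, polar_smul_right, smul_eq_mul]
  linear_combination h

lemma cconj_cconj (hn1 : n 1 = 1) (x : O) : cconj n (cconj n x) = x := by
  have ht : polar (⇑n) (cconj n x) 1 = polar (⇑n) x 1 := by
    rw [cconj, polar_sub_left, polar_smul_left, polar_one_one n hn1, smul_eq_mul]
    ring
  rw [cconj, ht, cconj, sub_sub_cancel]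

lemma n_cconj (hn1 : n 1 = 1) (x : O) : n (cconj n x) = n x := by
  have h := pol_def n (polar (⇑n) x 1 • (1 : O)) (-x)
  rw [polar_neg_right, polar_smul_left, polar_comm (⇑n) (1 : O) x, QuadraticMap.map_neg,
    QuadraticMap.map_smul, hn1, smul_eq_mul, smul_eq_mul, mul_one] at h
  rw [cconj, sub_eq_add_neg]
  linear_combination -h

lemma cconj_mul_mul (hnd : ∀ a : O, (∀ b : O, polar (⇑n) a b = 0) → a = 0)
    (hm : ∀ a b : O, n (a * b) = n a * n b) (hn1 : n 1 = 1) (x y : O) :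
    cconj n x * (x * y) = n x • y := by
  refine sub_eq_zero.mp (hnd _ fun z => ?_)
  rw [polar_sub_left, polar_mul_cconj n hm (cconj n x) (x * y) z, cconj_cconj n hn1,
    polar_mul_mul n hm, polar_smul_left, smul_eq_mul, sub_self]

lemma mul_cconj_mul (hnd : ∀ a : O, (∀ b : O, polar (⇑n) a b = 0) → a = 0)
    (hm : ∀ a b : O, n (a * b) = n a * n b) (hn1 : n 1 = 1) (x y : O) :
    x * (cconj n x * y) = n x • y := by
  refine sub_eq_zero.mp (hnd _ fun z => ?_)
  rw [polar_sub_left, polar_mul_cconj n hm x (cconj n x * y) z,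
    polar_mul_mul n hm, n_cconj n hn1, polar_smul_left, smul_eq_mul, sub_self]

lemma key3 (hnd : ∀ a : O, (∀ b : O, polar (⇑n) a b = 0) → a = 0)
    (hm : ∀ a b : O, n (a * b) = n a * n b) (hn1 : n 1 = 1) (a b y : O) :
    cconj n a * (b * y) + cconj n b * (a * y) = polar (⇑n) a b • y := by
  refine sub_eq_zero.mp (hnd _ fun z => ?_)
  rw [polar_sub_left, polar_add_left,
    polar_mul_cconj n hm (cconj n a) (b * y) z, cconj_cconj n hn1,
    polar_mul_cconj n hm (cconj n b) (a * y) z, cconj_cconj n hn1,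
    polar_four n hm b a y z, polar_comm (⇑n) b a, polar_smul_left, smul_eq_mul, sub_self]

end aux

/-- Let `O` be the complex octonion algebra (an 8-dimensional composition
algebra over ℂ, equipped with the complex conjugation `x ↦ cc x` coming from its compact
real form: an involutive, additive, conjugate-linear map which is multiplicative), and let
`β ∈ O` satisfy `(β | β) = 1` and `n β = 0`, where `(x | y) = (x : ȳ)`. Then
`x = β̃(β̄x) + (β̄)~(βx)` for every `x ∈ O`; consequently `O = ker L(β) ⊕ ker L(β̄)` where
`L(β)` is left multiplication by `β`, `ker L(β) = Im L(β̃)`, and `dim_ℂ ker L(β) = 4`. -/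
theorem stmt_19 {O : Type*} [NonAssocRing O] [Module ℂ O]
    [SMulCommClass ℂ O O] [IsScalarTower ℂ O O]
    (n : QuadraticForm ℂ O)
    (hnd : ∀ a : O, (∀ b : O, polar (⇑n) a b = 0) → a = 0)
    (hm : ∀ a b : O, n (a * b) = n a * n b)
    (hdim : Module.finrank ℂ O = 8)
    (cc : O → O)
    (hccadd : ∀ x y : O, cc (x + y) = cc x + cc y)
    (hccsmul : ∀ (z : ℂ) (x : O), cc (z • x) = (starRingEnd ℂ z) • cc x)
    (hccmul : ∀ x y : O, cc (x * y) = cc x * cc y)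
    (hccinv : ∀ x : O, cc (cc x) = x)
    (β : O)
    (hβ1 : polar (⇑n) β (cc β) = 1)
    (hβn : n β = 0) :
    (∀ x : O, x = cconj n β * (cc β * x) + cconj n (cc β) * (β * x)) ∧
    IsCompl (LinearMap.ker (LinearMap.mulLeft ℂ β))
            (LinearMap.ker (LinearMap.mulLeft ℂ (cc β))) ∧
    LinearMap.ker (LinearMap.mulLeft ℂ β)
      = LinearMap.range (LinearMap.mulLeft ℂ (cconj n β)) ∧
    Module.finrank ℂ (LinearMap.ker (LinearMap.mulLeft ℂ β)) = 4 := by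
  have h10 : (1 : O) ≠ 0 := by
    intro h1
    have : ∀ x : O, x = 0 := fun x => by rw [← mul_one x, h1, mul_zero]
    have hsub : Subsingleton O := ⟨fun a b => by rw [this a, this b]⟩
    rw [Module.finrank_zero_of_subsingleton] at hdim
    exact absurd hdim (by norm_num)
  have hn1 : n 1 = 1 := n_one n hnd hm h10
  -- cc fixes 1 and 0
  have cc1 : cc 1 = 1 := by
    have h := hccmul 1 (cc 1)
    rw [one_mul, hccinv, mul_one] at h
    exact h.symm
  have cc0 : cc 0 = 0 := by
    have h := hccadd 0 0
    rw [add_zero] at h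
    exact left_eq_add.mp h
  -- square identity : x * x = tr x • x - n x • 1
  have hsq : ∀ x : O, x * x = polar (⇑n) x 1 • x - n x • (1 : O) := by
    intro x
    have h := mul_cconj_mul n hnd hm hn1 x 1
    rw [mul_one, cconj, mul_sub, mul_smul_comm, mul_one] at h
    linear_combination (norm := module) -h
  -- n (cc β) = 0
  have hsb : n (cc β) = 0 := by
    have hb : β * β = polar (⇑n) β 1 • β := by
      rw [hsq β, hβn, zero_smul, sub_zero]
    have hcb : cc β * cc β = (starRingEnd ℂ (polar (⇑n) β 1)) • cc β := by
      rw [← hccmul, hb, hccsmul]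
    have hkey : (polar (⇑n) (cc β) 1 - starRingEnd ℂ (polar (⇑n) β 1)) • cc β
        = n (cc β) • (1 : O) := by
      have := hsq (cc β)
      rw [hcb] at this
      rw [sub_smul]
      linear_combination (norm := module) -this
    by_contra hs
    set t := polar (⇑n) (cc β) 1 - starRingEnd ℂ (polar (⇑n) β 1) with ht
    have htne : t ≠ 0 := by
      intro h0
      rw [h0, zero_smul] at hkey
      exact hs (by simpa [h10] using (smul_eq_zero.mp hkey.symm))
    have hcb1 : cc β = (t⁻¹ * n (cc β)) • (1 : O) := by
      calc cc β = (t⁻¹ * t) • cc β := by rw [inv_mul_cancel₀ htne, one_smul]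
        _ = t⁻¹ • (t • cc β) := by rw [mul_smul]
        _ = t⁻¹ • (n (cc β) • (1 : O)) := by rw [hkey]
        _ = (t⁻¹ * n (cc β)) • (1 : O) := by rw [mul_smul]
    set c := starRingEnd ℂ (t⁻¹ * n (cc β)) with hc
    have hbc : β = c • (1 : O) := by
      rw [← hccinv β, hcb1, hccsmul, cc1]
    have hcne : c ≠ 0 := by
      rw [hc, Ne, map_eq_zero, mul_eq_zero, inv_eq_zero]
      rintro (h2 | h2)
      exacts [htne h2, hs h2]
    have : n β = c * c := by
      rw [hbc, QuadraticMap.map_smul, hn1, smul_eq_mul, mul_one]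
    rw [hβn] at this
    exact hcne (mul_self_eq_zero.mp this.symm)
  -- part 1: the main identity
  have hmain : ∀ x : O, x = cconj n β * (cc β * x) + cconj n (cc β) * (β * x) := by
    intro x
    rw [key3 n hnd hm hn1 β (cc β) x, hβ1, one_smul]
  set K := LinearMap.ker (LinearMap.mulLeft ℂ β) with hK
  set K' := LinearMap.ker (LinearMap.mulLeft ℂ (cc β)) with hK'
  have memK : ∀ z : O, cconj n β * z ∈ K := fun z => by
    simp only [hK, LinearMap.mem_ker, LinearMap.mulLeft_apply]
    rw [mul_cconj_mul n hnd hm hn1 β z, hβn, zero_smul]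
  have memK' : ∀ z : O, cconj n (cc β) * z ∈ K' := fun z => by
    simp only [hK', LinearMap.mem_ker, LinearMap.mulLeft_apply]
    rw [mul_cconj_mul n hnd hm hn1 (cc β) z, hsb, zero_smul]
  have hcompl : IsCompl K K' := by
    constructor
    · rw [disjoint_iff, eq_bot_iff]
      intro x hx
      rcases Submodule.mem_inf.mp hx with ⟨h1, h2⟩
      simp only [hK, hK', LinearMap.mem_ker, LinearMap.mulLeft_apply] at h1 h2
      have := hmain x
      rw [h1, h2, mul_zero, mul_zero, add_zero] at this
      simpa [Submodule.mem_bot] using this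
    · rw [codisjoint_iff, eq_top_iff]
      intro x _
      have h := Submodule.add_mem_sup (memK (cc β * x)) (memK' (β * x))
      exact (hmain x).symm ▸ h
  have hker_range : K = LinearMap.range (LinearMap.mulLeft ℂ (cconj n β)) := by
    ext x
    simp only [hK, LinearMap.mem_ker, LinearMap.mem_range, LinearMap.mulLeft_apply]
    constructor
    · intro h1
      have := hmain x
      rw [h1, mul_zero, add_zero] at this
      exact ⟨cc β * x, this.symm⟩
    · rintro ⟨y, rfl⟩
      rw [mul_cconj_mul n hnd hm hn1 β y, hβn, zero_smul]
  haveI : FiniteDimensional ℂ O := FiniteDimensional.of_finrank_pos (by rw [hdim]; norm_num)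
  have hsum : Module.finrank ℂ K + Module.finrank ℂ K' = 8 := by
    rw [Submodule.finrank_add_eq_of_isCompl hcompl, hdim]
  have hKK' : ∀ x : O, x ∈ K → cc x ∈ K' := fun x hx => by
    simp only [hK, hK', LinearMap.mem_ker, LinearMap.mulLeft_apply] at hx ⊢
    rw [← hccmul, hx, cc0]
  have hK'K : ∀ x : O, x ∈ K' → cc x ∈ K := fun x hx => by
    simp only [hK, hK', LinearMap.mem_ker, LinearMap.mulLeft_apply] at hx ⊢
    rw [show β = cc (cc β) from (hccinv β).symm, ← hccmul, hx, cc0]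
  have ccR : ∀ (r : ℝ) (x : O), cc (r • x) = r • cc x := fun r x => by
    rw [← Complex.coe_smul, hccsmul, Complex.conj_ofReal, Complex.coe_smul]
  let e : K ≃ₗ[ℝ] K' :=
    { toFun := fun x => ⟨cc x, hKK' x x.2⟩
      invFun := fun y => ⟨cc y, hK'K y y.2⟩
      map_add' := fun x y => Subtype.ext (hccadd x y)
      map_smul' := fun r x => Subtype.ext (ccR r x)
      left_inv := fun x => Subtype.ext (hccinv x)
      right_inv := fun y => Subtype.ext (hccinv y) }
  have heq : Module.finrank ℂ K = Module.finrank ℂ K' := by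
    have h1 := e.finrank_eq
    rw [finrank_real_of_complex, finrank_real_of_complex] at h1
    omega
  exact ⟨hmain, hcompl, hker_range, by omega⟩
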